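/- Let k, t, d be positive integers with t | k, g = k/t, d ≥ k, and let B > 0. If α = 2Bd/(k(2d-k+t)) and β = 2Bt/(k(2d-k+t)), then Σ_{i=0}^{g-1} min(t·α, (d-i·t)·β) = B. -/

import Mathlib

open Finset

/-- Concurrent-repair minimum-bandwidth point: with
`α = 2Bd/(k(2d-k+t))` and `β = 2Bt/(k(2d-k+t))`, the capacity equals `B`. -/
theorem stmt_4 (k t d g : ℕ) (ht : 1 ≤ t) (hk : 1 ≤ k) (htk : t ∣ k)
    (hg : g = k / t) (hdk : k ≤ d) (B α β : ℝ) (hB : 0 < B)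
    (hα : α = 2 * B * d / (k * (2 * (d : ℝ) - k + t)))
    (hβ : β = 2 * B * t / (k * (2 * (d : ℝ) - k + t))) :
    (∑ i ∈ Finset.range g,
        min ((t : ℝ) * α) (((d : ℝ) - i * t) * β)) = B := by
  have hgt : g * t = k := by
    subst hg; exact Nat.div_mul_cancel htk
  have hg1 : 1 ≤ g := by
    rcases Nat.eq_zero_or_pos g with h | h
    · rw [h] at hgt; simp at hgt; omega
    · exact h
  have hkR : (1:ℝ) ≤ (k:ℝ) := by exact_mod_cast hk
  have htR : (1:ℝ) ≤ (t:ℝ) := by exact_mod_cast ht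
  have hdkR : (k:ℝ) ≤ (d:ℝ) := by exact_mod_cast hdk
  have hD : (0:ℝ) < (k:ℝ) * (2 * (d:ℝ) - k + t) := by nlinarith
  have hβ0 : 0 ≤ β := by
    rw [hβ]; positivity
  have htα : (t:ℝ) * α = (d:ℝ) * β := by
    rw [hα, hβ]; ring
  have hmin : ∀ i ∈ Finset.range g,
      min ((t : ℝ) * α) (((d : ℝ) - i * t) * β) = ((d : ℝ) - i * t) * β := by
    intro i _
    rw [htα, min_eq_right]
    have : (0:ℝ) ≤ (i:ℝ) * t := by positivity
    nlinarith
  rw [Finset.sum_congr rfl hmin]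
  have hsum : (∑ i ∈ Finset.range g, ((d : ℝ) - i * t) * β)
      = ((g:ℝ) * d - t * ((g:ℝ) * ((g:ℝ) - 1) / 2)) * β := by
    have hid : (∑ i ∈ Finset.range g, (i:ℝ)) = (g:ℝ) * ((g:ℝ) - 1) / 2 := by
      have h2 : ((∑ i ∈ Finset.range g, i) * 2) = g * (g - 1) := Finset.sum_range_id_mul_two g
      have h2R : ((∑ i ∈ Finset.range g, (i:ℝ)) * 2) = (g:ℝ) * ((g:ℝ) - 1) := by
        have := congrArg (Nat.cast : ℕ → ℝ) h2
        push_cast [Nat.cast_sub hg1] at this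
        convert this using 2
      linarith
    rw [← Finset.sum_mul]
    congr 1
    rw [Finset.sum_sub_distrib, Finset.sum_const, nsmul_eq_mul, ← hid, Finset.mul_sum]
    simp [mul_comm]
  rw [hsum, hβ]
  have hkgt : (k:ℝ) = (g:ℝ) * t := by exact_mod_cast hgt.symm
  rw [hkgt]
  have hD' : (0:ℝ) < ((g:ℝ)*t) * (2 * (d:ℝ) - (g:ℝ)*t + t) := by rw [← hkgt]; exact hD
  have hE : (0:ℝ) < 2 * (d:ℝ) - (g:ℝ)*t + t := by rw [← hkgt]; linarith
  field_simp [hE.ne']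
  have hE' : ((d:ℝ) * 2 + t - t * g) ≠ 0 := ne_of_gt (by linarith)
  linear_combination mul_inv_cancel₀ hE'
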